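/- In the independent random 2-SAT model with parameters α, p₀, p₁, p₂, let Z_t⁺ (resp. Z_t⁻) be the expected number of directed paths of length t in the implication digraph starting from a fixed positive (resp. negative) literal and visiting literals with pairwise distinct variables. Then for every t ≥ 0, the vector (Z_t⁺, Z_t⁻) is componentwise at most M(α)^t · (1, 1)ᵀ, where M(α) is the 2×2 matrix α · [[p₁, 2p₀], [2p₂, p₁]]. -/

import Mathlib

open MeasureTheory ENNReal Matrix

/-- The Bernoulli probability measure on `Bool` with success parameter `p` (clamped
to `[0,1]`; under the hypotheses of the theorem below the clamp is inactive). -/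
noncomputable def bern (p : ℝ≥0∞) : Measure Bool :=
  (PMF.bernoulli (min p 1).toNNReal
    (by simpa using (ENNReal.toNNReal_le_toNNReal (by simp) (by simp)).2 (min_le_right p 1))).toMeasure

instance (p : ℝ≥0∞) : IsProbabilityMeasure (bern p) := by
  unfold bern; infer_instance

/-- Index of the potential 2-clauses on `n` variables: `(0, i, j)` with `i < j` indexes
the clause `x_i ∨ x_j`, `(1, i, j)` with `i < j` indexes `¬x_i ∨ ¬x_j`, and `(2, i, j)`
with `i ≠ j` indexes `x_i ∨ ¬x_j`. -/
abbrev ClauseIdx (n : ℕ) := Fin 3 × Fin n × Fin n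

/-- Inclusion probability of each potential clause in the independent random 2-SAT
model: `2αp₂/n` for `x_i ∨ x_j`, `2αp₀/n` for `¬x_i ∨ ¬x_j`, `αp₁/n` for `x_i ∨ ¬x_j`. -/
noncomputable def clauseProb (α p₀ p₁ p₂ : ℝ) (n : ℕ) : ClauseIdx n → ℝ≥0∞ := fun x =>
  if x.1 = 0 then (if x.2.1 < x.2.2 then ENNReal.ofReal (2 * α * p₂ / n) else 0)
  else if x.1 = 1 then (if x.2.1 < x.2.2 then ENNReal.ofReal (2 * α * p₀ / n) else 0)
  else (if x.2.1 ≠ x.2.2 then ENNReal.ofReal (α * p₁ / n) else 0)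

/-- The independent random 2-SAT model: every potential clause is included
independently with its prescribed probability. -/
noncomputable def F2Measure (α p₀ p₁ p₂ : ℝ) (n : ℕ) : Measure (ClauseIdx n → Bool) :=
  Measure.pi fun i => bern (clauseProb α p₀ p₁ p₂ n i)

/-- Presence of the positive clause `x_a ∨ x_b` in the sampled formula. -/
def PosClause (n : ℕ) (ω : ClauseIdx n → Bool) (a b : Fin n) : Prop :=
  (a < b ∧ ω (0, a, b) = true) ∨ (b < a ∧ ω (0, b, a) = true)

/-- Presence of the negative clause `¬x_a ∨ ¬x_b` in the sampled formula. -/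
def NegClause (n : ℕ) (ω : ClauseIdx n → Bool) (a b : Fin n) : Prop :=
  (a < b ∧ ω (1, a, b) = true) ∨ (b < a ∧ ω (1, b, a) = true)

/-- Presence of the mixed clause `x_a ∨ ¬x_b` in the sampled formula. -/
def MixClause (n : ℕ) (ω : ClauseIdx n → Bool) (a b : Fin n) : Prop :=
  a ≠ b ∧ ω (2, a, b) = true

/-- The edge relation of the implication digraph of the sampled formula, on literals
`(a, s) : Fin n × Bool` (`(a, true)` is `x_a`, `(a, false)` is `¬x_a`): each included
clause `ℓ₁ ∨ ℓ₂` contributes the edges `¬ℓ₁ → ℓ₂` and `¬ℓ₂ → ℓ₁`. -/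
def ImpEdge (n : ℕ) (ω : ClauseIdx n → Bool) (u v : Fin n × Bool) : Prop :=
  (u.2 = false ∧ v.2 = true ∧ PosClause n ω u.1 v.1) ∨
  (u.2 = true ∧ v.2 = false ∧ NegClause n ω u.1 v.1) ∨
  (u.2 = true ∧ v.2 = true ∧ MixClause n ω v.1 u.1) ∨
  (u.2 = false ∧ v.2 = false ∧ MixClause n ω u.1 v.1)

/-- The number of directed paths of length `t` in the implication digraph of the sampled
formula that start at the literal `start` and visit literals with pairwise distinct
variables. -/
noncomputable def pathCount (n : ℕ) (ω : ClauseIdx n → Bool) (start : Fin n × Bool)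
    (t : ℕ) : ℕ :=
  Nat.card {L : Fin (t + 1) → Fin n × Bool //
    L 0 = start ∧
    (∀ s : Fin t, ImpEdge n ω (L s.castSucc) (L s.succ)) ∧
    (∀ i j : Fin (t + 1), i ≠ j → (L i).1 ≠ (L j).1)}


section Aux

/-- The clause index whose presence corresponds to the implication edge `u → v`. -/
def cIdx {n : ℕ} (u v : Fin n × Bool) : ClauseIdx n :=
  if u.2 then
    (if v.2 then (2, v.1, u.1)
     else (if u.1 < v.1 then (1, u.1, v.1) else (1, v.1, u.1)))
  else
    (if v.2 then (if u.1 < v.1 then (0, u.1, v.1) else (0, v.1, u.1))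
     else (2, u.1, v.1))

lemma bern_true (p : ℝ≥0∞) : bern p {true} = min p 1 := by
  rw [bern, PMF.toMeasure_apply_singleton _ _ (measurableSet_singleton _)]
  exact ENNReal.coe_toNNReal (by simp)

lemma edge_iff {n : ℕ} (ω : ClauseIdx n → Bool) (u v : Fin n × Bool) (h : u.1 ≠ v.1) :
    ImpEdge n ω u v ↔ ω (cIdx u v) = true := by
  obtain ⟨a, b1⟩ := u
  obtain ⟨b, b2⟩ := v
  simp only [ne_eq] at h
  rcases lt_or_gt_of_ne h with hlt | hlt <;>
  cases b1 <;> cases b2 <;>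
    simp [ImpEdge, PosClause, NegClause, MixClause, cIdx, hlt, hlt.ne, hlt.ne',
      not_lt_of_gt hlt, hlt.not_gt]

lemma cIdx_vars {n : ℕ} (u v : Fin n × Bool) :
    ((cIdx u v).2.1 = u.1 ∧ (cIdx u v).2.2 = v.1) ∨
      ((cIdx u v).2.1 = v.1 ∧ (cIdx u v).2.2 = u.1) := by
  obtain ⟨a, b1⟩ := u
  obtain ⟨b, b2⟩ := v
  cases b1 <;> cases b2 <;> simp [cIdx] <;> split <;> simp

lemma cIdx_inj {n t : ℕ} (L : Fin (t+1) → Fin n × Bool)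
    (hdist : ∀ i j : Fin (t + 1), i ≠ j → (L i).1 ≠ (L j).1) :
    Function.Injective (fun s : Fin t => cIdx (L s.castSucc) (L s.succ)) := by
  have hL : ∀ i j : Fin (t+1), (L i).1 = (L j).1 → i = j := by
    intro i j hij
    by_contra hne
    exact hdist i j hne hij
  intro a b h
  simp only at h
  have h1 : (cIdx (L a.castSucc) (L a.succ)).2.1 = (cIdx (L b.castSucc) (L b.succ)).2.1 :=
    congrArg (fun x => x.2.1) h
  have h2 : (cIdx (L a.castSucc) (L a.succ)).2.2 = (cIdx (L b.castSucc) (L b.succ)).2.2 :=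
    congrArg (fun x => x.2.2) h
  rcases cIdx_vars (L a.castSucc) (L a.succ) with ⟨ha1, ha2⟩ | ⟨ha1, ha2⟩ <;>
    rcases cIdx_vars (L b.castSucc) (L b.succ) with ⟨hb1, hb2⟩ | ⟨hb1, hb2⟩
  · exact Fin.castSucc_injective _ (hL _ _ (ha1 ▸ hb1 ▸ h1))
  · have c1 := congrArg Fin.val (hL _ _ (ha1 ▸ hb1 ▸ h1))
    have c2 := congrArg Fin.val (hL _ _ (ha2 ▸ hb2 ▸ h2))
    simp [Fin.val_succ] at c1 c2
    omega
  · have c1 := congrArg Fin.val (hL _ _ (ha1 ▸ hb1 ▸ h1))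
    have c2 := congrArg Fin.val (hL _ _ (ha2 ▸ hb2 ▸ h2))
    simp [Fin.val_succ] at c1 c2
    omega
  · exact Fin.succ_injective _ (hL _ _ (ha1 ▸ hb1 ▸ h1))

/-- The per-edge weight: `α p₁` for sign-preserving edges, `2αp₀` for `+ → -` edges
and `2αp₂` for `- → +` edges. -/
def gfun (α p₀ p₁ p₂ : ℝ) : Bool → Bool → ℝ := fun b b' =>
  if b then (if b' then α * p₁ else α * (2 * p₀))
  else (if b' then α * (2 * p₂) else α * p₁)

lemma gfun_nonneg {α p₀ p₁ p₂ : ℝ} (hα : 0 ≤ α) (h0 : 0 ≤ p₀) (h1 : 0 ≤ p₁)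
    (h2 : 0 ≤ p₂) (b b' : Bool) : 0 ≤ gfun α p₀ p₁ p₂ b b' := by
  cases b <;> cases b' <;> simp [gfun] <;> positivity

lemma clauseProb_cIdx (α p₀ p₁ p₂ : ℝ) (n : ℕ) (u v : Fin n × Bool) (h : u.1 ≠ v.1) :
    clauseProb α p₀ p₁ p₂ n (cIdx u v) = ENNReal.ofReal (gfun α p₀ p₁ p₂ u.2 v.2 / n) := by
  obtain ⟨a, b1⟩ := u
  obtain ⟨b, b2⟩ := v
  simp only [ne_eq] at h
  rcases lt_or_gt_of_ne h with hlt | hlt <;>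
  cases b1 <;> cases b2 <;>
    simp [clauseProb, cIdx, gfun, hlt, hlt.ne, hlt.ne', hlt.not_gt] <;>
    ring_nf

/-- Iterates of the bounding linear map, as a function on sign vectors. -/
def Wf (α p₀ p₁ p₂ : ℝ) : ℕ → Bool → ℝ
  | 0, _ => 1
  | (t+1), b => gfun α p₀ p₁ p₂ b true * Wf α p₀ p₁ p₂ t true
      + gfun α p₀ p₁ p₂ b false * Wf α p₀ p₁ p₂ t false

lemma Wf_eq (α p₀ p₁ p₂ : ℝ) (t : ℕ) (b : Bool) :
    Wf α p₀ p₁ p₂ t b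
      = (((α • !![p₁, 2 * p₀; 2 * p₂, p₁]) ^ t) *ᵥ fun _ => (1 : ℝ))
          (if b then 0 else 1) := by
  induction t generalizing b with
  | zero => simp [Wf]
  | succ t ih =>
      rw [pow_succ']
      rw [← Matrix.mulVec_mulVec]
      cases b <;>
        simp [Wf, ih, Matrix.mulVec, dotProduct, Fin.sum_univ_two,
          Matrix.smul_apply, mul_comm, gfun]

lemma sum_le_W (α p₀ p₁ p₂ : ℝ) (hg : ∀ b b', 0 ≤ gfun α p₀ p₁ p₂ b b')
    (n : ℕ) (hn : 0 < n) :
    ∀ (t : ℕ) (start : Fin n × Bool),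
      (∑ L : Fin (t+1) → Fin n × Bool,
        if L 0 = start then
          ∏ s : Fin t, gfun α p₀ p₁ p₂ (L s.castSucc).2 (L s.succ).2 / n
        else 0) ≤ Wf α p₀ p₁ p₂ t start.2 := by
  intro t
  induction t with
  | zero =>
      intro start
      rw [Fintype.sum_equiv (Equiv.funUnique (Fin 1) (Fin n × Bool))
        _ (fun x => if x = start then (1:ℝ) else 0)
        (by intro L; simp [Equiv.funUnique])]
      simp [Wf]
  | succ t ih =>
      intro start
      classical
      set g := gfun α p₀ p₁ p₂ with hgdef
      have hcons : ∀ (p : (Fin n × Bool) × (Fin (t+1) → Fin n × Bool)),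
          (if p.1 = start then
              (g p.1.2 (p.2 0).2 / n) *
                ∏ s : Fin t, g (p.2 s.castSucc).2 (p.2 s.succ).2 / n
            else 0)
          = (if (Fin.cons p.1 p.2 : Fin (t+2) → Fin n × Bool) 0 = start then
            ∏ s : Fin (t+1), g
              ((Fin.cons p.1 p.2 : Fin (t+2) → Fin n × Bool) s.castSucc).2
              ((Fin.cons p.1 p.2 : Fin (t+2) → Fin n × Bool) s.succ).2 / n
          else 0) := by
        rintro ⟨x, K⟩
        simp only [Fin.cons_zero]
        refine if_congr Iff.rfl ?_ rfl
        rw [Fin.prod_univ_succ]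
        have h1 : ∀ s : Fin t,
            g ((Fin.cons x K : Fin (t+2) → Fin n × Bool) s.succ.castSucc).2
              ((Fin.cons x K : Fin (t+2) → Fin n × Bool) s.succ.succ).2 / (n:ℝ)
            = g (K s.castSucc).2 (K s.succ).2 / n := fun s => by
          rw [← Fin.succ_castSucc]; simp
        rw [Finset.prod_congr rfl fun s (_ : s ∈ Finset.univ) => h1 s]
        simp only [Fin.castSucc_zero, Fin.cons_zero, Fin.cons_succ]
      rw [← Fintype.sum_equiv (Fin.consEquiv (fun _ : Fin (t+2) => Fin n × Bool))
        _ _ (fun p => hcons p)]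
      rw [Fintype.sum_prod_type]
      rw [Finset.sum_eq_single_of_mem start (Finset.mem_univ _)
        (by intro b _ hb; simp [hb])]
      rw [Finset.sum_congr rfl fun K (_ : K ∈ Finset.univ) => if_pos rfl]
      have expand : ∀ K : Fin (t+1) → Fin n × Bool,
          (g start.2 (K 0).2 / n) * ∏ s : Fin t, g (K s.castSucc).2 (K s.succ).2 / n
          = ∑ w : Fin n × Bool, if K 0 = w then
              (g start.2 w.2 / n) * ∏ s : Fin t, g (K s.castSucc).2 (K s.succ).2 / n
            else 0 := by
        intro K
        rw [Finset.sum_ite_eq]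
        simp
      rw [Finset.sum_congr rfl fun K (_ : K ∈ Finset.univ) => expand K, Finset.sum_comm]
      have hn' : (n:ℝ) ≠ 0 := Nat.cast_ne_zero.mpr hn.ne'
      have inner_le : ∀ w : Fin n × Bool,
          (∑ K : Fin (t+1) → Fin n × Bool, if K 0 = w then
              (g start.2 w.2 / n) * ∏ s : Fin t, g (K s.castSucc).2 (K s.succ).2 / n
            else 0) ≤ (g start.2 w.2 / n) * Wf α p₀ p₁ p₂ t w.2 := by
        intro w
        have heq : (∑ K : Fin (t+1) → Fin n × Bool, if K 0 = w then
              (g start.2 w.2 / n) * ∏ s : Fin t, g (K s.castSucc).2 (K s.succ).2 / n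
            else 0)
            = (g start.2 w.2 / n) * ∑ K : Fin (t+1) → Fin n × Bool,
                if K 0 = w then ∏ s : Fin t, g (K s.castSucc).2 (K s.succ).2 / n else 0 := by
          rw [Finset.mul_sum]
          exact Finset.sum_congr rfl fun K _ => by split <;> simp
        rw [heq]
        exact mul_le_mul_of_nonneg_left (ih w)
          (div_nonneg (hg _ _) (Nat.cast_nonneg n))
      refine le_trans (Finset.sum_le_sum fun w _ => inner_le w) (le_of_eq ?_)
      rw [Fintype.sum_prod_type]
      simp only [Fintype.sum_bool]
      rw [Finset.sum_const, Finset.card_univ, Fintype.card_fin, nsmul_eq_mul]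
      show (n : ℝ) * _ = _
      simp only [Wf]
      field_simp
      rw [hgdef]; ring

lemma expected_le (n : ℕ) (hn : 0 < n) (α p₀ p₁ p₂ : ℝ) (hα : 0 ≤ α)
    (h0 : 0 ≤ p₀) (h1 : 0 ≤ p₁) (h2 : 0 ≤ p₂) (t : ℕ) (start : Fin n × Bool) :
    (∫ ω, (pathCount n ω start t : ℝ) ∂(F2Measure α p₀ p₁ p₂ n))
      ≤ Wf α p₀ p₁ p₂ t start.2 := by
  classical
  set μ := F2Measure α p₀ p₁ p₂ n with hμ
  have hg : ∀ b b', 0 ≤ gfun α p₀ p₁ p₂ b b' := fun b b' => gfun_nonneg hα h0 h1 h2 b b'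
  set E : (Fin (t+1) → Fin n × Bool) → Set (ClauseIdx n → Bool) :=
    fun L => {ω | ∀ s : Fin t, ImpEdge n ω (L s.castSucc) (L s.succ)} with hE
  set P : Finset (Fin (t+1) → Fin n × Bool) :=
    Finset.univ.filter
      (fun L => L 0 = start ∧ ∀ i j : Fin (t+1), i ≠ j → (L i).1 ≠ (L j).1) with hP
  have hpoint : ∀ ω, (pathCount n ω start t : ℝ)
      = ∑ L ∈ P, Set.indicator (E L) (fun _ => (1:ℝ)) ω := by
    intro ω
    have hnat : pathCount n ω start t = ∑ L ∈ P, if ω ∈ E L then 1 else 0 := by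
      rw [pathCount, Nat.card_eq_fintype_card, Fintype.card_subtype]
      rw [Finset.card_filter]
      rw [hP, Finset.sum_filter]
      refine Finset.sum_congr rfl fun L _ => ?_
      simp only [hE, Set.mem_setOf_eq]
      split_ifs <;> first | rfl | tauto
    rw [hnat]
    push_cast
    refine Finset.sum_congr rfl fun L _ => ?_
    simp [Set.indicator_apply]
  have key : ∀ L ∈ P, MeasurableSet (E L) ∧
      (μ (E L)).toReal
        ≤ ∏ s : Fin t, gfun α p₀ p₁ p₂ (L s.castSucc).2 (L s.succ).2 / n := by
    intro L hL
    rw [hP, Finset.mem_filter] at hL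
    obtain ⟨-, hstart, hdist⟩ := hL
    have hne : ∀ s : Fin t, (L s.castSucc).1 ≠ (L s.succ).1 := fun s =>
      hdist _ _ (ne_of_lt (Fin.castSucc_lt_succ : s.castSucc < s.succ))
    set c : Fin t → ClauseIdx n := fun s => cIdx (L s.castSucc) (L s.succ) with hc
    set S : Finset (ClauseIdx n) := Finset.image c Finset.univ with hS
    set f : ClauseIdx n → Set Bool := fun i => if i ∈ S then {true} else Set.univ with hf
    have hEpi : E L = Set.pi Set.univ f := by
      ext ω
      simp only [hE, Set.mem_setOf_eq, Set.mem_pi, Set.mem_univ, true_implies]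
      constructor
      · intro h i
        rw [hf]
        by_cases hi : i ∈ S
        · simp only [if_pos hi]
          obtain ⟨s, -, rfl⟩ := Finset.mem_image.mp hi
          exact (edge_iff ω _ _ (hne s)).mp (h s)
        · simp only [if_neg hi]; trivial
      · intro h s
        refine (edge_iff ω _ _ (hne s)).mpr ?_
        have hi := h (c s)
        rw [hf] at hi
        simp only [if_pos (show c s ∈ S from Finset.mem_image_of_mem c (Finset.mem_univ s))] at hi
        exact hi
    have hfm : ∀ i, MeasurableSet (f i) := by
      intro i; rw [hf]
      by_cases hi : i ∈ S
      · simp only [if_pos hi]; exact measurableSet_singleton _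
      · simp only [if_neg hi]; exact MeasurableSet.univ
    refine ⟨hEpi ▸ MeasurableSet.univ_pi hfm, ?_⟩
    have hmeas : μ (E L) = ∏ s : Fin t,
        min (ENNReal.ofReal (gfun α p₀ p₁ p₂ (L s.castSucc).2 (L s.succ).2 / n)) 1 := by
      rw [hEpi, hμ, F2Measure, Measure.pi_pi]
      rw [← Finset.prod_subset (Finset.subset_univ S)
        (fun i _ hi => by rw [hf]; simp only [if_neg hi]; exact measure_univ)]
      rw [hS, Finset.prod_image (fun x _ y _ hxy => cIdx_inj L hdist hxy)]
      refine Finset.prod_congr rfl fun s _ => ?_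
      have hmem : cIdx (L s.castSucc) (L s.succ) ∈ S := by
        rw [hS]; exact Finset.mem_image_of_mem c (Finset.mem_univ s)
      rw [hf]
      simp only [if_pos hmem]
      rw [bern_true, clauseProb_cIdx α p₀ p₁ p₂ n _ _ (hne s)]
    rw [hmeas, ENNReal.toReal_prod]
    refine Finset.prod_le_prod (fun s _ => ENNReal.toReal_nonneg) fun s _ => ?_
    have hx : 0 ≤ gfun α p₀ p₁ p₂ (L s.castSucc).2 (L s.succ).2 / n :=
      div_nonneg (hg _ _) (Nat.cast_nonneg n)
    calc (min (ENNReal.ofReal (gfun α p₀ p₁ p₂ (L s.castSucc).2 (L s.succ).2 / n)) 1).toReal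
        ≤ (ENNReal.ofReal (gfun α p₀ p₁ p₂ (L s.castSucc).2 (L s.succ).2 / n)).toReal :=
          ENNReal.toReal_mono ENNReal.ofReal_ne_top (min_le_left _ _)
      _ = _ := ENNReal.toReal_ofReal hx
  haveI : IsProbabilityMeasure μ := by rw [hμ, F2Measure]; infer_instance
  have hint : (∫ ω, (pathCount n ω start t : ℝ) ∂μ) = ∑ L ∈ P, (μ (E L)).toReal := by
    simp only [hpoint]
    rw [MeasureTheory.integral_finset_sum _
      (fun L hL => (MeasureTheory.integrable_const (1:ℝ)).indicator (key L hL).1)]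
    refine Finset.sum_congr rfl fun L hL => ?_
    rw [MeasureTheory.integral_indicator_const (1:ℝ) (key L hL).1]
    simp
    rfl
  rw [hint]
  calc ∑ L ∈ P, (μ (E L)).toReal
      ≤ ∑ L ∈ P, ∏ s : Fin t, gfun α p₀ p₁ p₂ (L s.castSucc).2 (L s.succ).2 / n :=
        Finset.sum_le_sum fun L hL => (key L hL).2
    _ ≤ ∑ L ∈ Finset.univ.filter (fun L : Fin (t+1) → Fin n × Bool => L 0 = start),
          ∏ s : Fin t, gfun α p₀ p₁ p₂ (L s.castSucc).2 (L s.succ).2 / n := by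
        refine Finset.sum_le_sum_of_subset_of_nonneg ?_
          (fun L _ _ => Finset.prod_nonneg fun s _ =>
            div_nonneg (hg _ _) (Nat.cast_nonneg n))
        intro L hL
        rw [hP, Finset.mem_filter] at hL
        rw [Finset.mem_filter]
        exact ⟨hL.1, hL.2.1⟩
    _ = ∑ L : Fin (t+1) → Fin n × Bool,
          if L 0 = start then
            ∏ s : Fin t, gfun α p₀ p₁ p₂ (L s.castSucc).2 (L s.succ).2 / n
          else 0 := Finset.sum_filter _ _
    _ ≤ Wf α p₀ p₁ p₂ t start.2 := sum_le_W α p₀ p₁ p₂ hg n hn t start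

end Aux

/-- In the independent random 2-SAT model, the expected numbers
`Z_t⁺, Z_t⁻` of directed paths of length `t` in the implication digraph starting from a
fixed positive (resp. negative) literal and visiting pairwise distinct variables satisfy,
for every `t ≥ 0`, the entrywise bound `(Z_t⁺, Z_t⁻) ≤ M(α)^t (1,1)ᵀ`, where
`M(α) = α • !![p₁, 2p₀; 2p₂, p₁]`. -/
theorem stmt8 (n : ℕ) (hn : 2 ≤ n) (α p₀ p₁ p₂ : ℝ) (hα : 0 < α)
    (h0 : 0 ≤ p₀) (h1 : 0 ≤ p₁) (h2 : 0 ≤ p₂)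
    (hmax : 2 * α * max p₀ (max p₁ p₂) ≤ n) (t : ℕ) (v : Fin n) :
    (∫ ω, (pathCount n ω (v, true) t : ℝ) ∂(F2Measure α p₀ p₁ p₂ n))
        ≤ (((α • !![p₁, 2 * p₀; 2 * p₂, p₁]) ^ t) *ᵥ fun _ => (1 : ℝ)) 0 ∧
    (∫ ω, (pathCount n ω (v, false) t : ℝ) ∂(F2Measure α p₀ p₁ p₂ n))
        ≤ (((α • !![p₁, 2 * p₀; 2 * p₂, p₁]) ^ t) *ᵥ fun _ => (1 : ℝ)) 1 := by
  classical
  have hW := fun b => expected_le n (by omega) α p₀ p₁ p₂ hα.le h0 h1 h2 t (v, b)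
  refine ⟨le_trans (hW true) (le_of_eq ?_), le_trans (hW false) (le_of_eq ?_)⟩ <;>
    rw [Wf_eq] <;> rfl
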